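/- The dimension of the space of no-signalling, normalized joint conditional probability distributions for n parties, each with m measurement settings and k outcomes, is (m(k-1)+1)^n - 1. -/

import Mathlib

open Finset

namespace Stmt8

variable {n m k : ℕ}

abbrev J (m k : ℕ) := (Fin m × Fin (k-1)) ⊕ Unit

def emb {k : ℕ} (a : Fin (k-1)) : Fin k := ⟨a.1, lt_of_lt_of_le a.2 (Nat.sub_le k 1)⟩

lemma emb_inj {k : ℕ} {a b : Fin (k-1)} (h : emb a = emb b) : a = b :=
  Fin.val_injective (congrArg (Fin.val (n := k)) h)

lemma emb_val {k : ℕ} (a : Fin (k-1)) : ((emb a : Fin k) : ℕ) = a.1 := rfl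

lemma emb_val_lt {k : ℕ} (a : Fin (k-1)) : ((emb a : Fin k) : ℕ) < k - 1 := a.2

def w {m k : ℕ} (j : J m k) (r : Fin k) : ℝ :=
  match j with
  | .inl p => if r = emb p.2 then 1 else 0
  | .inr _ => 1

def cc {m k : ℕ} (j : J m k) (s : Fin m) (r : Fin k) : ℝ :=
  match j with
  | .inl p => if p.1 = s then
      (if r = emb p.2 then 1 else 0) - (if (r:ℕ) = k - 1 then 1 else 0) else 0
  | .inr _ => if (r:ℕ) = k - 1 then 1 else 0

def τ {m k : ℕ} (d : Fin m) (j : J m k) : Fin m :=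
  match j with
  | .inl p => p.1
  | .inr _ => d

lemma sum_delta_last (hk : 0 < k) :
    ∑ b : Fin k, (if (b:ℕ) = k - 1 then (1:ℝ) else 0) = 1 := by
  have hlt : k - 1 < k := Nat.sub_lt hk Nat.one_pos
  rw [Finset.sum_eq_single (⟨k-1, hlt⟩ : Fin k)]
  · simp
  · intro b _ hb
    rw [if_neg]
    intro hval
    exact hb (Fin.ext hval)
  · intro h; exact absurd (mem_univ _) h

lemma sum_delta_eq {κ : Type*} [Fintype κ] [DecidableEq κ] (x : κ) :
    ∑ b : κ, (if b = x then (1:ℝ) else 0) = 1 := by simp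

lemma embSum {k : ℕ} (c : Fin (k-1) → ℝ) (r : Fin k) :
    ∑ a : Fin (k-1), (if r = emb a then c a else 0) =
      if h : (r:ℕ) < k - 1 then c ⟨r.1, h⟩ else 0 := by
  split_ifs with h
  · rw [Finset.sum_eq_single (⟨r.1, h⟩ : Fin (k-1))]
    · rw [if_pos]; exact Fin.ext rfl
    · intro a _ ha
      rw [if_neg]
      intro hr
      exact ha (Fin.val_injective (congrArg Fin.val hr).symm)
    · intro h'; exact absurd (mem_univ _) h'
  · apply Finset.sum_eq_zero
    intro a _
    rw [if_neg]
    intro hr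
    exact h (by rw [hr]; exact a.2)


lemma key3 (hk : 0 < k) (j : J m k) (s : Fin m) :
    ∑ b : Fin k, cc j s b = if j = Sum.inr () then 1 else 0 := by
  match j with
  | .inl p =>
    rw [if_neg (by simp)]
    simp only [cc]
    by_cases h : p.1 = s
    · simp only [if_pos h, Finset.sum_sub_distrib, sum_delta_eq, sum_delta_last hk, sub_self]
    · simp [if_neg h]
  | .inr u =>
    rw [if_pos rfl]
    exact sum_delta_last hk

lemma key1 (s : Fin m) (r r' : Fin k) :
    ∑ j : J m k, cc j s r * w j r' = if r' = r then 1 else 0 := by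
  rw [Fintype.sum_sum_type]
  have h2 : ∑ u : Unit, cc (Sum.inr u : J m k) s r * w (Sum.inr u : J m k) r'
      = if (r:ℕ) = k - 1 then 1 else 0 := by
    simp only [Fintype.sum_unique, cc, w, mul_one]
  have h1 : ∑ p : Fin m × Fin (k-1), cc (Sum.inl p : J m k) s r * w (Sum.inl p) r'
      = ∑ a : Fin (k-1), (if r' = emb a then
          (if r = emb a then (1:ℝ) else 0) - (if (r:ℕ) = k - 1 then 1 else 0) else 0) := by
    rw [Fintype.sum_prod_type_right]
    refine Finset.sum_congr rfl fun a _ => ?_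
    simp only [cc, w]
    rw [Finset.sum_eq_single s]
    · rw [if_pos rfl, mul_comm]
      split_ifs <;> ring
    · intro s' _ hs'; rw [if_neg hs', zero_mul]
    · intro h; exact absurd (mem_univ _) h
  rw [h1, h2, embSum (fun a => (if r = emb a then (1:ℝ) else 0) - (if (r:ℕ) = k - 1 then 1 else 0)) r']
  by_cases h : (r':ℕ) < k - 1
  · rw [dif_pos h]
    have he : emb (⟨r'.1, h⟩ : Fin (k-1)) = r' := Fin.ext rfl
    rw [he]
    have : (if r = r' then (1:ℝ) else 0) = if r' = r then 1 else 0 := by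
      split_ifs with h1 h2 h3 <;> first | rfl | (exact absurd h1.symm h2) | (exact absurd h3.symm h1)
    rw [← this]; ring
  · rw [dif_neg h, zero_add]
    have hr' : (r':ℕ) = k - 1 := by omega
    by_cases hrr : r' = r
    · rw [if_pos hrr, if_pos (by rw [← hrr]; exact hr')]
    · rw [if_neg hrr, if_neg]
      intro hval
      exact hrr (Fin.ext (by rw [hr', hval]))

lemma key2 (hk : 0 < k) (d : Fin m) (j j' : J m k) :
    ∑ b : Fin k, w j' b * cc j (τ d j') b = if j = j' then 1 else 0 := by
  match j' with
  | .inl p' =>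
    have hsum : ∀ g : Fin k → ℝ, ∑ b : Fin k, w (Sum.inl p' : J m k) b * g b = g (emb p'.2) := by
      intro g
      simp only [w]
      rw [Finset.sum_eq_single (emb p'.2)]
      · rw [if_pos rfl, one_mul]
      · intro b _ hb; rw [if_neg hb, zero_mul]
      · intro h; exact absurd (mem_univ _) h
    rw [hsum]
    match j with
    | .inl p =>
      simp only [cc, τ]
      have hne : ¬ ((emb p'.2 : Fin k) : ℕ) = k - 1 := by
        have := emb_val_lt p'.2; omega
      by_cases hp1 : p.1 = p'.1
      · simp only [if_pos hp1, if_neg hne, sub_zero]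
        by_cases hp2 : p.2 = p'.2
        · rw [if_pos (by rw [hp2]), if_pos (by cases p; cases p'; simp_all)]
        · rw [if_neg, if_neg]
          · intro hEq
            rcases Sum.inl.inj hEq with h
            exact hp2 (congrArg Prod.snd h)
          · intro hEq
            exact hp2 (emb_inj hEq.symm)
      · simp only [hp1, ↓reduceIte]; rw [if_neg (by intro hEq; exact hp1 (congrArg Prod.fst (Sum.inl.inj hEq)))]
    | .inr u =>
      simp only [cc, τ]
      rw [if_neg (by have := emb_val_lt p'.2; omega), if_neg (by simp)]
  | .inr u =>
    simp only [w, one_mul]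
    rw [key3 hk]



lemma sum_prod_swap {ι : Type*} [Fintype ι] [DecidableEq ι] {κ : Type*} [Fintype κ]
    (f : ι → κ → ℝ) :
    ∑ r : ι → κ, ∏ i, f i (r i) = ∏ i, ∑ b, f i b :=
  (Fintype.prod_sum f).symm

lemma prodDelta {ι : Type*} [Fintype ι] {κ : Type*} [DecidableEq κ] [DecidableEq (ι → κ)]
    (p q : ι → κ) :
    ∏ i, (if p i = q i then (1:ℝ) else 0) = if p = q then 1 else 0 := by
  by_cases h : p = q
  · subst h; simp
  · rw [if_neg h]
    obtain ⟨i, hi⟩ := Function.ne_iff.mp h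
    exact Finset.prod_eq_zero (mem_univ i) (if_neg hi)

def NSP (q : (Fin n → Fin m) → (Fin n → Fin k) → ℝ) : Prop :=
  ∀ i : Fin n, ∀ s s' : Fin n → Fin m, (∀ j, j ≠ i → s j = s' j) →
    ∀ r : Fin n → Fin k,
      ∑ b : Fin k, q s (Function.update r i b) = ∑ b : Fin k, q s' (Function.update r i b)

def Φf (d : Fin m) (q : (Fin n → Fin m) → (Fin n → Fin k) → ℝ) (t : Fin n → J m k) : ℝ :=
  ∑ r : Fin n → Fin k, (∏ i, w (t i) (r i)) * q (fun i => τ d (t i)) r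

def Ψf (f : (Fin n → J m k) → ℝ) (s : Fin n → Fin m) (r : Fin n → Fin k) : ℝ :=
  ∑ t : Fin n → J m k, (∏ i, cc (t i) (s i) (r i)) * f t

def Wf (q : (Fin n → Fin m) → (Fin n → Fin k) → ℝ) (t : Fin n → J m k)
    (s : Fin n → Fin m) : ℝ :=
  ∑ r : Fin n → Fin k, (∏ i, w (t i) (r i)) * q s r

lemma split_symm_update (hk : 0 < k) (i : Fin n) (g : {j : Fin n // j ≠ i} → Fin k)
    (b : Fin k) :
    (Equiv.funSplitAt i (Fin k)).symm (b, g)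
      = Function.update ((Equiv.funSplitAt i (Fin k)).symm (⟨0, hk⟩, g)) i b := by
  funext j
  by_cases h : j = i
  · subst h
    rw [Function.update_self]
    simp [Equiv.funSplitAt, Equiv.piSplitAt]
  · rw [Function.update_of_ne h]
    simp [Equiv.funSplitAt, Equiv.piSplitAt, h]

lemma single_step (hk : 0 < k) (q : (Fin n → Fin m) → (Fin n → Fin k) → ℝ)
    (hq : NSP q) (t : Fin n → J m k) (i : Fin n) (ht : t i = Sum.inr ())
    (s1 s2 : Fin n → Fin m) (hs : ∀ j, j ≠ i → s1 j = s2 j) :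
    Wf q t s1 = Wf q t s2 := by
  have hP : ∀ (r : Fin n → Fin k) (b : Fin k),
      (∏ j, w (t j) (Function.update r i b j)) = ∏ j, w (t j) (r j) := by
    intro r b
    refine Finset.prod_congr rfl fun j _ => ?_
    by_cases h : j = i
    · subst h
      rw [Function.update_self, ht]
      rfl
    · rw [Function.update_of_ne h]
  have key : ∀ s : Fin n → Fin m, Wf q t s =
      ∑ g : {j : Fin n // j ≠ i} → Fin k,
        (∏ j, w (t j) (((Equiv.funSplitAt i (Fin k)).symm (⟨0, hk⟩, g)) j)) *
          ∑ b : Fin k, q s (Function.update ((Equiv.funSplitAt i (Fin k)).symm (⟨0, hk⟩, g)) i b) := by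
    intro s
    rw [Wf, ← Equiv.sum_comp ((Equiv.funSplitAt i (Fin k)).symm)
      (fun r => (∏ j, w (t j) (r j)) * q s r), Fintype.sum_prod_type, Finset.sum_comm]
    refine Finset.sum_congr rfl fun g _ => ?_
    rw [Finset.mul_sum]
    refine Finset.sum_congr rfl fun b _ => ?_
    rw [split_symm_update hk i g b, hP]
  rw [key s1, key s2]
  refine Finset.sum_congr rfl fun g _ => ?_
  rw [hq i s1 s2 hs]

lemma marg (hk : 0 < k) (q : (Fin n → Fin m) → (Fin n → Fin k) → ℝ)
    (hq : NSP q) (t : Fin n → J m k) (s1 s2 : Fin n → Fin m)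
    (h : ∀ i, t i ≠ Sum.inr () → s1 i = s2 i) :
    Wf q t s1 = Wf q t s2 := by
  have main : ∀ (D : Finset (Fin n)) (s1 s2 : Fin n → Fin m),
      (∀ i ∉ D, s1 i = s2 i) → (∀ i ∈ D, t i = Sum.inr ()) → Wf q t s1 = Wf q t s2 := by
    intro D
    induction D using Finset.induction_on with
    | empty =>
      intro s1 s2 h1 _
      have : s1 = s2 := funext fun i => h1 i (notMem_empty i)
      rw [this]
    | @insert i D hiD ih =>
      intro s1 s2 h1 hD
      have e1 : Wf q t s1 = Wf q t (Function.update s1 i (s2 i)) :=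
        single_step hk q hq t i (hD i (mem_insert_self i D)) _ _
          (fun j hj => (Function.update_of_ne hj _ _).symm)
      have e2 : Wf q t (Function.update s1 i (s2 i)) = Wf q t s2 := by
        refine ih _ _ (fun j hj => ?_) (fun j hj => hD j (mem_insert_of_mem hj))
        by_cases hji : j = i
        · subst hji; rw [Function.update_self]
        · rw [Function.update_of_ne hji]
          exact h1 j (by simp [hji, hj])
      exact e1.trans e2
  refine main (univ.filter (fun i => t i = Sum.inr ())) s1 s2 (fun i hi => ?_)
    (fun i hi => (mem_filter.mp hi).2)
  refine h i fun hti => hi (mem_filter.mpr ⟨mem_univ i, hti⟩)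


lemma phi_psi (hk : 0 < k) (d : Fin m) (f : (Fin n → J m k) → ℝ) :
    Φf d (Ψf f) = f := by
  funext t
  unfold Φf Ψf
  calc ∑ r : Fin n → Fin k, (∏ i, w (t i) (r i)) *
        ∑ t' : Fin n → J m k, (∏ i, cc (t' i) ((fun i => τ d (t i)) i) (r i)) * f t'
      = ∑ t' : Fin n → J m k,
          (∑ r : Fin n → Fin k, ∏ i, (w (t i) (r i) * cc (t' i) (τ d (t i)) (r i))) * f t' := by
        simp_rw [Finset.mul_sum]
        rw [Finset.sum_comm]
        refine Finset.sum_congr rfl fun t' _ => ?_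
        rw [Finset.sum_mul]
        refine Finset.sum_congr rfl fun r _ => ?_
        rw [Finset.prod_mul_distrib]
        ring
    _ = ∑ t' : Fin n → J m k, (∏ i, (if t' i = t i then (1:ℝ) else 0)) * f t' := by
        refine Finset.sum_congr rfl fun t' _ => ?_
        rw [sum_prod_swap (fun i b => w (t i) b * cc (t' i) (τ d (t i)) b)]
        congr 1
        exact Finset.prod_congr rfl fun i _ => key2 hk d (t' i) (t i)
    _ = f t := by
        simp_rw [prodDelta]
        simp

lemma psi_phi (hk : 0 < k) (d : Fin m) (q : (Fin n → Fin m) → (Fin n → Fin k) → ℝ)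
    (hq : NSP q) : Ψf (Φf d q) = q := by
  funext s r
  unfold Ψf
  have step1 : ∀ t : Fin n → J m k,
      (∏ i, cc (t i) (s i) (r i)) * Φf d q t
        = (∏ i, cc (t i) (s i) (r i)) * Wf q t s := by
    intro t
    rcases eq_or_ne (∏ i, cc (t i) (s i) (r i)) 0 with h | h
    · rw [h, zero_mul, zero_mul]
    · congr 1
      have hΦ : Φf d q t = Wf q t (fun i => τ d (t i)) := rfl
      rw [hΦ]
      refine marg hk q hq t _ s fun i hi => ?_
      have hfac : cc (t i) (s i) (r i) ≠ 0 := fun h0 =>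
        h (Finset.prod_eq_zero (mem_univ i) h0)
      match hti : t i with
      | .inl p =>
        rw [hti] at hfac
        simp only [cc] at hfac
        by_cases hp : p.1 = s i
        · simp [τ, hti, hp]
        · rw [if_neg hp] at hfac
          exact absurd rfl hfac
      | .inr u =>
        exact absurd hti hi
  calc ∑ t : Fin n → J m k, (∏ i, cc (t i) (s i) (r i)) * Φf d q t
      = ∑ t : Fin n → J m k, (∏ i, cc (t i) (s i) (r i)) * Wf q t s :=
        Finset.sum_congr rfl fun t _ => step1 t
    _ = ∑ r' : Fin n → Fin k,
          (∑ t : Fin n → J m k, ∏ i, (cc (t i) (s i) (r i) * w (t i) (r' i))) * q s r' := by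
        unfold Wf
        simp_rw [Finset.mul_sum]
        rw [Finset.sum_comm]
        refine Finset.sum_congr rfl fun r' _ => ?_
        rw [Finset.sum_mul]
        refine Finset.sum_congr rfl fun t _ => ?_
        rw [Finset.prod_mul_distrib]
        ring
    _ = ∑ r' : Fin n → Fin k, (∏ i, (if r' i = r i then (1:ℝ) else 0)) * q s r' := by
        refine Finset.sum_congr rfl fun r' _ => ?_
        rw [sum_prod_swap (fun i j => cc j (s i) (r i) * w j (r' i))]
        congr 1
        exact Finset.prod_congr rfl fun i _ => key1 (s i) (r i) (r' i)
    _ = q s r := by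
        simp_rw [prodDelta]
        simp


lemma psi_form (hk : 0 < k) (f : (Fin n → J m k) → ℝ) (s : Fin n → Fin m)
    (r : Fin n → Fin k) (i : Fin n) :
    ∑ b : Fin k, Ψf f s (Function.update r i b)
      = ∑ t : Fin n → J m k, f t * ((if t i = Sum.inr () then (1:ℝ) else 0) *
          ∏ j ∈ univ.erase i, cc (t j) (s j) (r j)) := by
  unfold Ψf
  rw [Finset.sum_comm]
  refine Finset.sum_congr rfl fun t _ => ?_
  have hsplit : ∀ b : Fin k,
      (∏ j, cc (t j) (s j) (Function.update r i b j))
        = cc (t i) (s i) b * ∏ j ∈ univ.erase i, cc (t j) (s j) (r j) := by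
    intro b
    rw [← Finset.mul_prod_erase univ _ (mem_univ i), Function.update_self]
    congr 1
    refine Finset.prod_congr rfl fun j hj => ?_
    rw [Function.update_of_ne (mem_erase.mp hj).1]
  simp_rw [hsplit]
  rw [← Finset.sum_mul, ← Finset.sum_mul, key3 hk]
  ring

lemma psi_mem_ns (hk : 0 < k) (f : (Fin n → J m k) → ℝ) : NSP (Ψf f) := by
  intro i s s' hss' r
  rw [psi_form hk f s r i, psi_form hk f s' r i]
  refine Finset.sum_congr rfl fun t _ => ?_
  congr 1
  congr 1
  refine Finset.prod_congr rfl fun j hj => ?_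
  rw [hss' j (mem_erase.mp hj).1]

lemma psi_sum_const (hk : 0 < k) (f : (Fin n → J m k) → ℝ) (s s' : Fin n → Fin m) :
    ∑ r : Fin n → Fin k, Ψf f s r = ∑ r : Fin n → Fin k, Ψf f s' r := by
  have form : ∀ s : Fin n → Fin m, ∑ r : Fin n → Fin k, Ψf f s r
      = ∑ t : Fin n → J m k, f t * ∏ i, (if t i = Sum.inr () then (1:ℝ) else 0) := by
    intro s
    unfold Ψf
    rw [Finset.sum_comm]
    refine Finset.sum_congr rfl fun t _ => ?_
    rw [← Finset.sum_mul, mul_comm]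
    congr 1
    rw [sum_prod_swap (fun i b => cc (t i) (s i) b)]
    exact Finset.prod_congr rfl fun i _ => key3 hk (t i) (s i)
  rw [form s, form s']

variable (n m k) in
def Lsub : Submodule ℝ ((Fin n → Fin m) → (Fin n → Fin k) → ℝ) where
  carrier := {q | NSP q ∧ ∀ s s' : Fin n → Fin m, ∑ r : Fin n → Fin k, q s r = ∑ r : Fin n → Fin k, q s' r}
  add_mem' := by
    rintro a b ⟨ha1, ha2⟩ ⟨hb1, hb2⟩
    constructor
    · intro i s s' h r
      simp only [Pi.add_apply]
      rw [Finset.sum_add_distrib, Finset.sum_add_distrib, ha1 i s s' h r, hb1 i s s' h r]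
    · intro s s'
      simp only [Pi.add_apply]
      rw [Finset.sum_add_distrib, Finset.sum_add_distrib, ha2 s s', hb2 s s']
  zero_mem' := by
    constructor
    · intro i s s' h r; simp
    · intro s s'; simp
  smul_mem' := by
    rintro c a ⟨ha1, ha2⟩
    constructor
    · intro i s s' h r
      simp only [Pi.smul_apply, smul_eq_mul]
      rw [← Finset.mul_sum, ← Finset.mul_sum, ha1 i s s' h r]
    · intro s s'
      simp only [Pi.smul_apply, smul_eq_mul]
      rw [← Finset.mul_sum, ← Finset.mul_sum, ha2 s s']

variable (n m k) in
def V0sub : Submodule ℝ ((Fin n → Fin m) → (Fin n → Fin k) → ℝ) where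
  carrier := {q | NSP q ∧ ∀ s : Fin n → Fin m, ∑ r : Fin n → Fin k, q s r = 0}
  add_mem' := by
    rintro a b ⟨ha1, ha2⟩ ⟨hb1, hb2⟩
    constructor
    · intro i s s' h r
      simp only [Pi.add_apply]
      rw [Finset.sum_add_distrib, Finset.sum_add_distrib, ha1 i s s' h r, hb1 i s s' h r]
    · intro s
      simp only [Pi.add_apply]
      rw [Finset.sum_add_distrib, ha2 s, hb2 s, add_zero]
  zero_mem' := by
    constructor
    · intro i s s' h r; simp
    · intro s; simp
  smul_mem' := by
    rintro c a ⟨ha1, ha2⟩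
    constructor
    · intro i s s' h r
      simp only [Pi.smul_apply, smul_eq_mul]
      rw [← Finset.mul_sum, ← Finset.mul_sum, ha1 i s s' h r]
    · intro s
      simp only [Pi.smul_apply, smul_eq_mul]
      rw [← Finset.mul_sum, ha2 s, mul_zero]

def ΦL (d : Fin m) : Lsub n m k →ₗ[ℝ] ((Fin n → J m k) → ℝ) where
  toFun q := Φf d q.1
  map_add' := by
    intro q q'
    funext t
    simp only [Submodule.coe_add, Pi.add_apply, Φf]
    rw [← Finset.sum_add_distrib]
    exact Finset.sum_congr rfl fun r _ => by ring
  map_smul' := by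
    intro c q
    funext t
    simp only [Submodule.coe_smul, Pi.smul_apply, Φf, RingHom.id_apply, smul_eq_mul]
    rw [Finset.mul_sum]
    exact Finset.sum_congr rfl fun r _ => by ring

def ΨL : ((Fin n → J m k) → ℝ) →ₗ[ℝ] ((Fin n → Fin m) → (Fin n → Fin k) → ℝ) where
  toFun f := Ψf f
  map_add' := by
    intro f f'
    funext s r
    simp only [Pi.add_apply, Ψf]
    rw [← Finset.sum_add_distrib]
    exact Finset.sum_congr rfl fun t _ => by ring
  map_smul' := by
    intro c f
    funext s r
    simp only [Pi.smul_apply, Ψf, RingHom.id_apply, smul_eq_mul]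
    rw [Finset.mul_sum]
    exact Finset.sum_congr rfl fun t _ => by ring


end Stmt8


open Stmt8 Finset

/-- The dimension (of the affine hull) of the set of no-signalling,
normalized joint conditional probability distributions for `n` parties, each with `m`
settings and `k` outcomes, is `(m(k-1)+1)^n - 1`. -/
theorem stmt8 (n m k : ℕ) (hn : 0 < n) (hm : 0 < m) (hk : 0 < k)
    (NS : Set ((Fin n → Fin m) → (Fin n → Fin k) → ℝ))
    (hNS : ∀ p, p ∈ NS ↔
      ((∀ s r, 0 ≤ p s r) ∧
       (∀ s, ∑ r : Fin n → Fin k, p s r = 1) ∧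
       (∀ i : Fin n, ∀ s s' : Fin n → Fin m, (∀ j, j ≠ i → s j = s' j) →
         ∀ r : Fin n → Fin k,
           ∑ b : Fin k, p s (Function.update r i b) =
           ∑ b : Fin k, p s' (Function.update r i b)))) :
    Module.finrank ℝ (affineSpan ℝ NS).direction = (m * (k - 1) + 1) ^ n - 1 := by
  classical
  set d : Fin m := ⟨0, hm⟩ with hd
  have hkR : ((k:ℝ) ^ n) ≠ 0 := by positivity
  set u : (Fin n → Fin m) → (Fin n → Fin k) → ℝ := fun _ _ => ((k:ℝ)^n)⁻¹ with hu_def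
  have hcard : (Fintype.card (Fin n → Fin k) : ℝ) = (k:ℝ)^n := by
    simp [Fintype.card_fun]
  have husum : ∀ s : Fin n → Fin m, ∑ r : Fin n → Fin k, u s r = 1 := by
    intro s
    rw [Finset.sum_const, card_univ, nsmul_eq_mul, hcard, mul_inv_cancel₀ hkR]
  have hu : u ∈ NS := by
    rw [hNS]
    refine ⟨fun s r => by positivity, husum, fun i s s' h r => rfl⟩
  -- Part 1: direction = V0sub
  have hdir : (affineSpan ℝ NS).direction = V0sub n m k := by
    rw [direction_affineSpan]
    apply le_antisymm
    · rw [vectorSpan_def]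
      rw [Submodule.span_le]
      rintro v hv
      rw [Set.mem_vsub] at hv
      obtain ⟨p, hp, p', hp', rfl⟩ := hv
      obtain ⟨-, hp2, hp3⟩ := (hNS p).mp hp
      obtain ⟨-, hp2', hp3'⟩ := (hNS p').mp hp'
      constructor
      · intro i s s' h r
        simp only [vsub_eq_sub, Pi.sub_apply]
        rw [Finset.sum_sub_distrib, Finset.sum_sub_distrib, hp3 i s s' h r, hp3' i s s' h r]
      · intro s
        simp only [vsub_eq_sub, Pi.sub_apply]
        rw [Finset.sum_sub_distrib, hp2 s, hp2' s, sub_self]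
    · rintro q ⟨hqNS, hq0⟩
      set B : ℝ := ∑ s : Fin n → Fin m, ∑ r : Fin n → Fin k, |q s r| with hB_def
      have hB0 : 0 ≤ B := Finset.sum_nonneg fun s _ => Finset.sum_nonneg fun r _ => abs_nonneg _
      set ε : ℝ := ((k:ℝ)^n)⁻¹ / (B + 1) with hε_def
      have hε : 0 < ε := by positivity
      have hεB : ε * (B + 1) = ((k:ℝ)^n)⁻¹ := div_mul_cancel₀ _ (by positivity)
      have hqB : ∀ s r, |q s r| ≤ B := by
        intro s r
        calc |q s r| ≤ ∑ r' : Fin n → Fin k, |q s r'| :=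
              Finset.single_le_sum (f := fun r' => |q s r'|)
                (fun r' _ => abs_nonneg _) (mem_univ r)
          _ ≤ B := Finset.single_le_sum
              (f := fun s => ∑ r' : Fin n → Fin k, |q s r'|)
              (fun s' _ => Finset.sum_nonneg fun r' _ => abs_nonneg _) (mem_univ s)
      set p : (Fin n → Fin m) → (Fin n → Fin k) → ℝ := fun s r => u s r + ε * q s r with hp_def
      have hpNS : p ∈ NS := by
        rw [hNS]
        refine ⟨?_, ?_, ?_⟩
        · intro s r
          have h1 : ε * |q s r| ≤ ε * (B + 1) :=
            mul_le_mul_of_nonneg_left (by linarith [hqB s r]) hε.le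
          have h2 : -(ε * |q s r|) ≤ ε * q s r := by
            have := neg_abs_le (q s r)
            nlinarith
          have h3 : (0:ℝ) < ((k:ℝ)^n)⁻¹ := by positivity
          simp only [hp_def, hu_def]
          nlinarith
        · intro s
          rw [Finset.sum_add_distrib, husum s, ← Finset.mul_sum, hq0 s, mul_zero, add_zero]
        · intro i s s' h r
          simp only [hp_def]
          rw [Finset.sum_add_distrib, Finset.sum_add_distrib, ← Finset.mul_sum, ← Finset.mul_sum,
            hqNS i s s' h r]
      have hsub : p -ᵥ u = ε • q := by
        funext s r
        simp only [vsub_eq_sub, Pi.sub_apply, hp_def, Pi.smul_apply, smul_eq_mul]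
        ring
      have hmem : ε • q ∈ vectorSpan ℝ NS := by
        rw [← hsub]
        exact vsub_mem_vectorSpan ℝ hpNS hu
      have : q = ε⁻¹ • (ε • q) := by
        rw [smul_smul, inv_mul_cancel₀ hε.ne', one_smul]
      rw [this]
      exact Submodule.smul_mem _ _ hmem
  rw [hdir]
  -- Part 2: the linear algebra
  set t0 : Fin n → J m k := fun _ => Sum.inr () with ht0
  have hΦt0 : ∀ q : (Fin n → Fin m) → (Fin n → Fin k) → ℝ,
      Φf d q t0 = ∑ r : Fin n → Fin k, q (fun _ => d) r := by
    intro q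
    unfold Φf
    have hτ : (fun i => τ d (t0 i)) = fun _ : Fin n => d := by
      funext i; rw [ht0]; rfl
    rw [hτ]
    refine Finset.sum_congr rfl fun r _ => ?_
    have : (∏ i, w (t0 i) (r i)) = 1 := by
      simp [ht0, w]
    rw [this, one_mul]
  set c : Lsub n m k →ₗ[ℝ] ℝ := (LinearMap.proj t0).comp (ΦL d) with hc
  have hcval : ∀ q : Lsub n m k, c q = ∑ r : Fin n → Fin k, q.1 (fun _ => d) r := by
    intro q
    simp only [hc, LinearMap.comp_apply, LinearMap.proj_apply, ΦL]
    exact hΦt0 q.1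
  have hV0 : V0sub n m k = (LinearMap.ker c).map (Lsub n m k).subtype := by
    ext q
    simp only [Submodule.mem_map, LinearMap.mem_ker, Submodule.subtype_apply]
    constructor
    · rintro ⟨h1, h2⟩
      refine ⟨⟨q, h1, fun s s' => by rw [h2 s, h2 s']⟩, ?_, rfl⟩
      rw [hcval]
      exact h2 _
    · rintro ⟨⟨q', hq'1, hq'2⟩, hker, rfl⟩
      rw [hcval] at hker
      exact ⟨hq'1, fun s => by rw [hq'2 s (fun _ => d)]; exact hker⟩
  rw [hV0, Submodule.finrank_map_subtype_eq]
  have hΨmem : ∀ f : (Fin n → J m k) → ℝ, Ψf f ∈ Lsub n m k :=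
    fun f => ⟨psi_mem_ns hk f, psi_sum_const hk f⟩
  set ΨLr : ((Fin n → J m k) → ℝ) →ₗ[ℝ] Lsub n m k :=
    LinearMap.codRestrict (Lsub n m k) ΨL hΨmem with hΨLr
  have hco1 : (ΦL d).comp ΨLr = LinearMap.id := by
    apply LinearMap.ext
    intro f
    simp only [LinearMap.comp_apply, LinearMap.id_apply, hΨLr, LinearMap.codRestrict_apply]
    show Φf d (Ψf f) = f
    exact phi_psi hk d f
  have hco2 : ΨLr.comp (ΦL d) = LinearMap.id := by
    apply LinearMap.ext
    intro q
    apply Subtype.ext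
    simp only [LinearMap.comp_apply, LinearMap.id_apply, hΨLr, LinearMap.codRestrict_apply]
    show Ψf (Φf d q.1) = q.1
    exact psi_phi hk d q.1 q.2.1
  set e : ((Fin n → J m k) → ℝ) ≃ₗ[ℝ] Lsub n m k :=
    LinearEquiv.ofLinear ΨLr (ΦL d) hco2 hco1 with he
  have hrankL : Module.finrank ℝ (Lsub n m k) = (m * (k - 1) + 1) ^ n := by
    rw [← e.finrank_eq, Module.finrank_fintype_fun_eq_card]
    simp [Fintype.card_fun]
  have hsurj : Function.Surjective c := by
    intro a
    set f0 : (Fin n → J m k) → ℝ := fun t => if t = t0 then 1 else 0 with hf0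
    have h1 : c (ΨLr f0) = 1 := by
      have : c (ΨLr f0) = Φf d (Ψf f0) t0 := rfl
      rw [this, phi_psi hk d f0, hf0]
      simp
    exact ⟨a • ΨLr f0, by rw [map_smul, h1, smul_eq_mul, mul_one]⟩
  have hrange : LinearMap.range c = ⊤ := LinearMap.range_eq_top.mpr hsurj
  have h2 := LinearMap.finrank_range_add_finrank_ker c
  rw [hrange, finrank_top, Module.finrank_self, hrankL] at h2
  have hpos : 0 < (m * (k - 1) + 1) ^ n := pow_pos (by omega) n
  omega
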